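/- arXiv:2502.07489 — 2 statements merged into one kernel-verified Lean document; each statement's English description precedes it below -/
import Mathlib

section
/- (Lemma 1 of the paper.) Let T > 0 and let x : [0,T] → ℝ be continuously differentiable. For ε > 0 with K := T/ε ∈ ℕ, define the divided differences x^{diff,ε}_k := (x(kε) − x((k−1)ε))/ε for k = 1,…,K, and the numerical standard deviation numstd[(y_k)_{k=1:K}] := √((1/K)∑_{k=1}^{K}(y_k − ȳ)²) where ȳ = (1/K)∑_{k=1}^{K} y_k. Then numstd[(x^{diff,ε}_k)_{k=1:K}] → MGD(x) as ε → 0 (along ε with T/ε ∈ ℕ). -/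
open MeasureTheory intervalIntegral

/-- The mean gradient deviation of `x : [0,T] → ℝ`:
`MGD(x) = min_{c ∈ ℝ} √((1/T)∫₀ᵀ (x'(t) − c)² dt)` (as an infimum over `c`). -/
noncomputable def MGD (T : ℝ) (x : ℝ → ℝ) : ℝ :=
  ⨅ c : ℝ, Real.sqrt ((1 / T) * ∫ t in (0:ℝ)..T, (deriv x t - c) ^ 2)

/-- The numerical standard deviation of the finite tuple `(y 0, …, y (K-1))`:
`numstd[(y_k)] = √((1/K)∑_k (y_k − ȳ)²)` where `ȳ` is the arithmetic mean. -/
noncomputable def numstd (K : ℕ) (y : ℕ → ℝ) : ℝ :=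
  Real.sqrt ((1 / (K : ℝ)) * ∑ k ∈ Finset.range K,
    (y k - (1 / (K : ℝ)) * ∑ j ∈ Finset.range K, y j) ^ 2)

lemma aux_sqrt_sub_le {u v : ℝ} (hv : 0 ≤ v) (huv : v ≤ u) :
    Real.sqrt u - Real.sqrt v ≤ Real.sqrt (u - v) := by
  nlinarith [Real.sq_sqrt hv, Real.sq_sqrt (by linarith : (0:ℝ) ≤ u - v),
    Real.sq_sqrt (le_trans hv huv), Real.sqrt_nonneg v, Real.sqrt_nonneg (u - v),
    Real.sqrt_nonneg u, mul_nonneg (Real.sqrt_nonneg v) (Real.sqrt_nonneg (u - v))]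

lemma aux_abs_sqrt_sub {u v : ℝ} (hu : 0 ≤ u) (hv : 0 ≤ v) :
    |Real.sqrt u - Real.sqrt v| ≤ Real.sqrt |u - v| := by
  rcases le_total v u with h | h
  · rw [abs_of_nonneg (by linarith : (0:ℝ) ≤ u - v),
      abs_of_nonneg (sub_nonneg.mpr (Real.sqrt_le_sqrt h))]
    exact aux_sqrt_sub_le hv h
  · rw [abs_of_nonpos (by linarith : u - v ≤ 0),
      abs_of_nonpos (sub_nonpos.mpr (Real.sqrt_le_sqrt h))]
    have := aux_sqrt_sub_le hu h
    simpa [neg_sub] using this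

/-- **Lemma 1 of the paper.** For `T > 0` and `x` continuously
differentiable, the numerical standard deviation of the divided differences
`(x(kε) − x((k−1)ε))/ε`, `k = 1,…,K`, converges to `MGD(x)` as `ε → 0` along
step sizes `ε` with `T/ε = K ∈ ℕ`. -/
theorem statement10 (T : ℝ) (hT : 0 < T) (x : ℝ → ℝ) (hx : ContDiff ℝ 1 x) :
    ∀ δ > 0, ∃ ε₀ > 0, ∀ ε : ℝ, 0 < ε → ε < ε₀ → ∀ K : ℕ, (K : ℝ) * ε = T →
      |numstd K (fun k => (x (((k : ℝ) + 1) * ε) - x ((k : ℝ) * ε)) / ε) - MGD T x| < δ := by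
  intro δ hδ
  set f := deriv x with hf_def
  have hf : Continuous f := hx.continuous_deriv le_rfl
  have hxd : Differentiable ℝ x := hx.differentiable one_ne_zero
  set c : ℝ := (x T - x 0) / T with hc
  have hIf : (∫ t in (0:ℝ)..T, f t) = x T - x 0 :=
    integral_deriv_eq_sub (fun t _ => hxd t) (hf.intervalIntegrable 0 T)
  have hInt1 : IntervalIntegrable (fun t => (f t - c) ^ 2) volume 0 T :=
    ((hf.sub continuous_const).pow 2).intervalIntegrable _ _
  -- MGD is attained at c
  have hMGD : MGD T x = Real.sqrt ((1 / T) * ∫ t in (0:ℝ)..T, (f t - c) ^ 2) := by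
    have expand : ∀ c' : ℝ, (∫ t in (0:ℝ)..T, (f t - c') ^ 2)
        = (∫ t in (0:ℝ)..T, (f t - c) ^ 2) + T * (c - c') ^ 2 := by
      intro c'
      have hfun : (fun t => (f t - c') ^ 2)
          = fun t => (f t - c) ^ 2 + ((2 * (c - c')) * f t + ((c' ^ 2 - c ^ 2))) := by
        funext t; ring
      rw [hfun, intervalIntegral.integral_add (g := fun t => 2 * (c - c') * f t + (c' ^ 2 - c ^ 2)) hInt1
          (((continuous_const.mul hf).add continuous_const).intervalIntegrable _ _),
        intervalIntegral.integral_add (f := fun t => 2 * (c - c') * f t)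
          ((continuous_const.mul hf).intervalIntegrable _ _)
          (intervalIntegrable_const),
        intervalIntegral.integral_const_mul, hIf, intervalIntegral.integral_const]
      have hcT : c * T = x T - x 0 := by rw [hc, div_mul_cancel₀ _ hT.ne']
      have h2 : 2 * (c - c') * (x T - x 0) = 2 * (c - c') * (c * T) := by rw [hcT]
      rw [h2]; simp only [smul_eq_mul]; ring
    unfold MGD
    rw [← hf_def]
    apply le_antisymm
    · exact ciInf_le ⟨0, by rintro v ⟨c', rfl⟩; exact Real.sqrt_nonneg _⟩ c
    · apply le_ciInf; intro c'
      apply Real.sqrt_le_sqrt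
      rw [expand c']
      have h1 : 0 ≤ T * (c - c') ^ 2 := by positivity
      have h2 : 0 < 1 / T := by positivity
      nlinarith
  -- a bound C for |f - c| on [0, T]
  obtain ⟨C, hC⟩ : ∃ C, ∀ t ∈ Set.Icc (0:ℝ) T, |f t - c| ≤ C := by
    obtain ⟨C, hC⟩ := (isCompact_Icc (a := (0:ℝ)) (b := T)).exists_bound_of_continuousOn
      ((hf.sub continuous_const).continuousOn)
    exact ⟨C, fun t ht => by simpa using hC t ht⟩
  have hC0 : 0 ≤ C := le_trans (abs_nonneg _) (hC 0 ⟨le_refl 0, hT.le⟩)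
  -- choose δ'
  set δ' : ℝ := min 1 (δ ^ 2 / (2 * (2 * C + 1))) with hδ'def
  have hδ' : 0 < δ' := lt_min one_pos (by positivity)
  have hδ'1 : δ' ≤ 1 := min_le_left _ _
  have hB : δ' * (2 * C + δ') ≤ δ ^ 2 / 2 := by
    have h1 : δ' * (2 * C + δ') ≤ δ' * (2 * C + 1) :=
      mul_le_mul_of_nonneg_left (by linarith) hδ'.le
    have h2 : δ' ≤ δ ^ 2 / (2 * (2 * C + 1)) := min_le_right _ _
    have h3 : (0:ℝ) < 2 * C + 1 := by linarith
    calc δ' * (2 * C + δ') ≤ (δ ^ 2 / (2 * (2 * C + 1))) * (2 * C + 1) := by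
          apply le_trans h1 (mul_le_mul_of_nonneg_right h2 h3.le)
      _ = δ ^ 2 / 2 := by field_simp
  -- uniform continuity modulus
  have hUC := (isCompact_Icc (a := (0:ℝ)) (b := T)).uniformContinuousOn_of_continuous
    hf.continuousOn
  obtain ⟨η, hη, hmod⟩ := Metric.uniformContinuousOn_iff.mp hUC δ' hδ'
  refine ⟨η, hη, ?_⟩
  intro ε hε hεη K hKε
  have hK0 : 0 < K := by
    by_contra h
    push_neg at h
    interval_cases K
    simp at hKε; linarith
  have hKR : (0:ℝ) < K := Nat.cast_pos.mpr hK0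
  set y : ℕ → ℝ := fun k => (x (((k : ℝ) + 1) * ε) - x ((k : ℝ) * ε)) / ε with hy
  -- the mean of y equals c
  have hsum : ∑ j ∈ Finset.range K, y j = (x T - x 0) / ε := by
    have htel : ∑ j ∈ Finset.range K, (x (((j + 1 : ℕ) : ℝ) * ε) - x ((j : ℝ) * ε))
        = x ((K : ℝ) * ε) - x ((0 : ℕ) * ε) :=
      Finset.sum_range_sub (fun k : ℕ => x ((k : ℝ) * ε)) K
    have : ∑ j ∈ Finset.range K, y j
        = (∑ j ∈ Finset.range K, (x (((j + 1 : ℕ) : ℝ) * ε) - x ((j : ℝ) * ε))) / ε := by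
      rw [Finset.sum_div]
      apply Finset.sum_congr rfl
      intro j _
      push_cast
      rfl
    rw [this, htel, hKε]
    norm_num
  have hmean : (1 / (K : ℝ)) * ∑ j ∈ Finset.range K, y j = c := by
    rw [hsum, hc, ← hKε]
    rw [div_mul_eq_mul_div, one_mul, div_div]
    ring_nf
  -- FTC on subintervals
  have hFTC : ∀ a b : ℝ, (∫ t in a..b, f t) = x b - x a := fun a b =>
    integral_deriv_eq_sub (fun t _ => hxd t) (hf.intervalIntegrable a b)
  -- per-interval estimate
  have hper : ∀ k ∈ Finset.range K,
      |ε * (y k - c) ^ 2 - ∫ t in ((k : ℝ) * ε)..(((k : ℝ) + 1) * ε), (f t - c) ^ 2|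
        ≤ ε * (δ' * (2 * C + δ')) := by
    intro k hk
    rw [Finset.mem_range] at hk
    set a : ℝ := (k : ℝ) * ε
    set b : ℝ := ((k : ℝ) + 1) * ε
    have hab : b - a = ε := by simp [a, b]; ring
    have ha0 : 0 ≤ a := by positivity
    have hbT : b ≤ T := by
      rw [← hKε]
      have h1 : (k : ℝ) + 1 ≤ (K : ℝ) := by exact_mod_cast hk
      calc b = ((k : ℝ) + 1) * ε := rfl
        _ ≤ (K : ℝ) * ε := mul_le_mul_of_nonneg_right h1 hε.le
    have hsub : Set.Icc a b ⊆ Set.Icc 0 T := by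
      apply Set.Icc_subset_Icc ha0 hbT
    have haleb : a ≤ b := by linarith [hab, hε.le]
    -- |y k - f t| ≤ δ' for t ∈ [a,b]
    have hyft : ∀ t ∈ Set.Icc a b, |y k - f t| ≤ δ' := by
      intro t ht
      have hyk : ε * y k = x b - x a := by
        simp only [hy]
        field_simp
        rw [mul_comm ε, mul_comm ε]
      have key : ε * (y k - f t) = ∫ s in a..b, (f s - f t) := by
        rw [intervalIntegral.integral_sub (hf.intervalIntegrable a b)
          intervalIntegrable_const, hFTC a b, intervalIntegral.integral_const,
          smul_eq_mul, hab]
        linarith [hyk]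
      have hbound : ∀ s ∈ Set.uIoc a b, ‖f s - f t‖ ≤ δ' := by
        intro s hs
        have hs' : s ∈ Set.Icc a b := by
          rw [Set.uIoc_of_le haleb] at hs
          exact ⟨hs.1.le, hs.2⟩
        have hst : dist s t < η := by
          rw [Real.dist_eq]
          have h1 : |s - t| ≤ b - a := abs_sub_le_iff.mpr
            ⟨by linarith [hs'.1, hs'.2, ht.1, ht.2], by linarith [hs'.1, hs'.2, ht.1, ht.2]⟩
          rw [hab] at h1
          linarith
        have := hmod s (hsub hs') t (hsub ht) hst
        rw [Real.dist_eq] at this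
        exact le_of_lt (by simpa using this)
      have hnorm := intervalIntegral.norm_integral_le_of_norm_le_const hbound
      rw [← key] at hnorm
      have h5 : ε * |y k - f t| ≤ δ' * ε := by
        simpa [Real.norm_eq_abs, abs_mul, abs_of_pos hε, hab] using hnorm
      exact le_of_mul_le_mul_left (by linarith) hε
    -- pointwise bound on the integrand difference
    have hpt : ∀ t ∈ Set.uIoc a b, ‖(y k - c) ^ 2 - (f t - c) ^ 2‖ ≤ δ' * (2 * C + δ') := by
      intro t ht
      have ht' : t ∈ Set.Icc a b := by
        rw [Set.uIoc_of_le haleb] at ht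
        exact ⟨ht.1.le, ht.2⟩
      have h1 : |y k - f t| ≤ δ' := hyft t ht'
      have h2 : |f t - c| ≤ C := hC t (hsub ht')
      have h3 : |y k - c| ≤ C + δ' := by
        calc |y k - c| = |(f t - c) + (y k - f t)| := by congr 1; ring
          _ ≤ |f t - c| + |y k - f t| := abs_add_le _ _
          _ ≤ C + δ' := by linarith
      rw [Real.norm_eq_abs]
      have heq : (y k - c) ^ 2 - (f t - c) ^ 2 = (y k - f t) * ((y k - c) + (f t - c)) := by
        ring
      rw [heq, abs_mul]
      have h4 : |(y k - c) + (f t - c)| ≤ 2 * C + δ' := by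
        calc |(y k - c) + (f t - c)| ≤ |y k - c| + |f t - c| := abs_add_le _ _
          _ ≤ 2 * C + δ' := by linarith
      exact mul_le_mul h1 h4 (abs_nonneg _) hδ'.le
    -- combine
    have hconst : ε * (y k - c) ^ 2 = ∫ t in a..b, (y k - c) ^ 2 := by
      rw [intervalIntegral.integral_const, smul_eq_mul, hab]
    rw [hconst, ← intervalIntegral.integral_sub (g := fun t => (f t - c) ^ 2) intervalIntegrable_const
      (((hf.sub continuous_const).pow 2).intervalIntegrable _ _)]
    have := intervalIntegral.norm_integral_le_of_norm_le_const hpt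
    calc |∫ t in a..b, ((y k - c) ^ 2 - (f t - c) ^ 2)|
        ≤ δ' * (2 * C + δ') * |b - a| := this
      _ = ε * (δ' * (2 * C + δ')) := by rw [hab, abs_of_pos hε]; ring
  -- adjacent intervals sum
  have hadj : ∑ k ∈ Finset.range K, (∫ t in ((k : ℝ) * ε)..(((k : ℝ) + 1) * ε), (f t - c) ^ 2)
      = ∫ t in (0:ℝ)..T, (f t - c) ^ 2 := by
    have := intervalIntegral.sum_integral_adjacent_intervals
      (a := fun k : ℕ => (k : ℝ) * ε) (n := K) (μ := volume)
      (f := fun t => (f t - c) ^ 2)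
      (fun k _ => ((hf.sub continuous_const).pow 2).intervalIntegrable _ _)
    have hcast : ∀ k : ℕ, ((k + 1 : ℕ) : ℝ) * ε = ((k : ℝ) + 1) * ε := by
      intro k; push_cast; ring
    simp only [hcast] at this
    rw [this]
    norm_num [hKε]
  -- sum estimate
  set S : ℝ := ∑ k ∈ Finset.range K, (y k - c) ^ 2 with hS
  have hsumest : |ε * S - ∫ t in (0:ℝ)..T, (f t - c) ^ 2| ≤ T * (δ' * (2 * C + δ')) := by
    rw [← hadj, hS, Finset.mul_sum, ← Finset.sum_sub_distrib]
    calc |∑ k ∈ Finset.range K, (ε * (y k - c) ^ 2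
            - ∫ t in ((k : ℝ) * ε)..(((k : ℝ) + 1) * ε), (f t - c) ^ 2)|
        ≤ ∑ k ∈ Finset.range K, |ε * (y k - c) ^ 2
            - ∫ t in ((k : ℝ) * ε)..(((k : ℝ) + 1) * ε), (f t - c) ^ 2| :=
          Finset.abs_sum_le_sum_abs _ _
      _ ≤ ∑ k ∈ Finset.range K, ε * (δ' * (2 * C + δ')) := Finset.sum_le_sum hper
      _ = T * (δ' * (2 * C + δ')) := by
          rw [Finset.sum_const, Finset.card_range, nsmul_eq_mul, ← hKε]; ring
  -- final estimate on the pre-sqrt values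
  have hfinal : |(1 / (K : ℝ)) * S - (1 / T) * ∫ t in (0:ℝ)..T, (f t - c) ^ 2|
      ≤ δ' * (2 * C + δ') := by
    have hKe : (1 / (K : ℝ)) * S = (1 / T) * (ε * S) := by
      rw [← hKε]
      field_simp
    rw [hKe, ← mul_sub, abs_mul, abs_of_pos (by positivity : (0:ℝ) < 1 / T)]
    calc (1 / T) * |ε * S - ∫ t in (0:ℝ)..T, (f t - c) ^ 2|
        ≤ (1 / T) * (T * (δ' * (2 * C + δ'))) := by
          apply mul_le_mul_of_nonneg_left hsumest (by positivity)
      _ = δ' * (2 * C + δ') := by field_simp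
  -- nonnegativity
  have hInn : 0 ≤ (1 / T) * ∫ t in (0:ℝ)..T, (f t - c) ^ 2 := by
    apply mul_nonneg (by positivity)
    apply intervalIntegral.integral_nonneg hT.le
    intro u _; positivity
  have hSn : 0 ≤ (1 / (K : ℝ)) * S := by positivity
  -- conclude
  have hnum : numstd K y = Real.sqrt ((1 / (K : ℝ)) * S) := by
    unfold numstd
    rw [hmean]
  rw [hnum, hMGD]
  calc |Real.sqrt ((1 / (K : ℝ)) * S)
          - Real.sqrt ((1 / T) * ∫ t in (0:ℝ)..T, (f t - c) ^ 2)|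
      ≤ Real.sqrt |(1 / (K : ℝ)) * S - (1 / T) * ∫ t in (0:ℝ)..T, (f t - c) ^ 2| :=
        aux_abs_sqrt_sub hSn hInn
    _ ≤ Real.sqrt (δ ^ 2 / 2) := Real.sqrt_le_sqrt (le_trans hfinal hB)
    _ < Real.sqrt (δ ^ 2) := by
        apply Real.sqrt_lt_sqrt (by positivity)
        nlinarith
    _ = δ := by rw [Real.sqrt_sq hδ.le]
end

section
/- Let T > 0, let (Ω, 𝔽, μ) be a probability space, and let X : Ω → (ℝ → ℝ) be such that for every ω ∈ Ω, X ω restricted to [0,T] is continuously differentiable, the map (ω, t) ↦ (X ω)'(t) is jointly measurable, and there is a constant M with |(X ω)'(t)| ≤ M for all ω and t ∈ [0,T]. Define MPGD := (1/T)∫₀ᵀ √(E[((X·)'(t) − E[(X·)'(t)])²]) dt. For ε > 0 with K := T/ε ∈ ℕ and grid points t = ε, 2ε, …, T, let σ_ε(t) denote the standard deviation (over ω) of the random divided difference ((X ω)(t) − (X ω)(t−ε))/ε. Then (ε/T)∑_{t=ε,2ε,…,T} σ_ε(t) → MPGD as ε → 0 (along ε with T/ε ∈ ℕ). -/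
open MeasureTheory intervalIntegral

/-- `|√a - √b| ≤ √|a - b|`. -/
lemma abs_sqrt_sub_sqrt_le (a b : ℝ) :
    |Real.sqrt a - Real.sqrt b| ≤ Real.sqrt |a - b| := by
  wlog h : b ≤ a generalizing a b
  · rw [abs_sub_comm, abs_sub_comm a b]; exact this b a (le_of_not_ge h)
  rcases le_or_gt b 0 with hb | hb
  · rw [Real.sqrt_eq_zero_of_nonpos hb]
    simp only [sub_zero]
    rw [abs_of_nonneg (Real.sqrt_nonneg a)]
    exact (Real.sqrt_le_sqrt (le_abs_self _)).trans' (Real.sqrt_le_sqrt (by cases abs_cases (a-b) <;> linarith))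
  · have h1 : Real.sqrt a ≤ Real.sqrt b + Real.sqrt (a - b) := by
      rw [← Real.sqrt_sq (by positivity : (0:ℝ) ≤ Real.sqrt b + Real.sqrt (a - b))]
      apply Real.sqrt_le_sqrt
      have hb' := Real.sq_sqrt hb.le
      have hab := Real.sq_sqrt (sub_nonneg.2 h)
      nlinarith [Real.sqrt_nonneg b, Real.sqrt_nonneg (a - b)]
    have h2 : Real.sqrt b ≤ Real.sqrt a := Real.sqrt_le_sqrt h
    rw [abs_of_nonneg (sub_nonneg.2 h2), abs_of_nonneg (sub_nonneg.2 h)]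
    linarith

/-- Index set of rational pairs in `[0,T]²` at distance at most `ε`. -/
def oscIdx (T ε : ℝ) : Set (ℚ × ℚ) :=
  {p | 0 ≤ (p.1 : ℝ) ∧ (p.1 : ℝ) ≤ T ∧ 0 ≤ (p.2 : ℝ) ∧ (p.2 : ℝ) ≤ T ∧
    |(p.1 : ℝ) - (p.2 : ℝ)| ≤ ε}

/-- Modulus of continuity of `d` on `[0,T]` at scale `ε` (over rational points). -/
noncomputable def osc (d : ℝ → ℝ) (T ε : ℝ) : ℝ :=
  ⨆ p : oscIdx T ε, |d (p.1.1 : ℝ) - d (p.1.2 : ℝ)|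

lemma oscIdx_zero_mem {T ε : ℝ} (hT : 0 ≤ T) (hε : 0 ≤ ε) :
    ((0 : ℚ), (0 : ℚ)) ∈ oscIdx T ε := by
  simp [oscIdx, hT, hε]

lemma osc_bddAbove {d : ℝ → ℝ} {T ε M : ℝ}
    (hM : ∀ t ∈ Set.Icc (0:ℝ) T, |d t| ≤ M) :
    BddAbove (Set.range fun p : oscIdx T ε => |d (p.1.1 : ℝ) - d (p.1.2 : ℝ)|) := by
  refine ⟨2 * M, ?_⟩
  rintro x ⟨p, rfl⟩
  obtain ⟨h1, h2, h3, h4, -⟩ := p.2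
  calc |d (p.1.1 : ℝ) - d (p.1.2 : ℝ)| ≤ |d (p.1.1 : ℝ)| + |d (p.1.2 : ℝ)| := abs_sub _ _
  _ ≤ M + M := add_le_add (hM _ ⟨h1, h2⟩) (hM _ ⟨h3, h4⟩)
  _ = 2 * M := by ring

lemma osc_nonneg {d : ℝ → ℝ} {T ε M : ℝ} (hT : 0 ≤ T) (hε : 0 ≤ ε)
    (hM : ∀ t ∈ Set.Icc (0:ℝ) T, |d t| ≤ M) :
    0 ≤ osc d T ε := by
  have := le_ciSup (osc_bddAbove (ε := ε) hM) ⟨_, oscIdx_zero_mem hT hε⟩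
  simpa [osc] using this

lemma osc_le {d : ℝ → ℝ} {T ε C : ℝ} (hT : 0 ≤ T) (hε : 0 ≤ ε)
    (h : ∀ p : ℚ × ℚ, p ∈ oscIdx T ε → |d (p.1 : ℝ) - d (p.2 : ℝ)| ≤ C) :
    osc d T ε ≤ C := by
  have : Nonempty (oscIdx T ε) := ⟨⟨_, oscIdx_zero_mem hT hε⟩⟩
  exact ciSup_le fun p => h p.1 p.2

lemma le_osc {d : ℝ → ℝ} {T ε M : ℝ}
    (hM : ∀ t ∈ Set.Icc (0:ℝ) T, |d t| ≤ M) {p : ℚ × ℚ} (hp : p ∈ oscIdx T ε) :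
    |d (p.1 : ℝ) - d (p.2 : ℝ)| ≤ osc d T ε :=
  le_ciSup (osc_bddAbove hM) (⟨p, hp⟩ : oscIdx T ε)

lemma osc_mono {d : ℝ → ℝ} {T ε ε' M : ℝ} (hT : 0 ≤ T) (hε : 0 ≤ ε) (hεε' : ε ≤ ε')
    (hM : ∀ t ∈ Set.Icc (0:ℝ) T, |d t| ≤ M) :
    osc d T ε ≤ osc d T ε' := by
  refine osc_le hT hε fun p hp => le_osc hM ?_
  obtain ⟨h1, h2, h3, h4, h5⟩ := hp
  exact ⟨h1, h2, h3, h4, h5.trans hεε'⟩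

lemma exists_rat_near' {T : ℝ} (hT : 0 < T) {s : ℝ} (hs : s ∈ Set.Icc (0:ℝ) T)
    {θ : ℝ} (hθ : 0 < θ) :
    ∃ q : ℚ, (q : ℝ) ∈ Set.Icc (0:ℝ) T ∧ |(q : ℝ) - s| < θ := by
  obtain ⟨hs0, hsT⟩ := hs
  rcases lt_or_eq_of_le hsT with h | h
  · obtain ⟨q, hq1, hq2⟩ := exists_rat_btwn (show s < min T (s + θ) by
      simp [h, hθ])
    exact ⟨q, ⟨by linarith [hq1], le_of_lt (hq2.trans_le (min_le_left _ _))⟩,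
      by rw [abs_of_nonneg (by linarith)]; have := hq2.trans_le (min_le_right _ _); linarith⟩
  · obtain ⟨q, hq1, hq2⟩ := exists_rat_btwn (show max 0 (T - θ) < T by
      simp [hT, hθ])
    have h1 := lt_of_le_of_lt (le_max_left _ _) hq1
    have h2 := lt_of_le_of_lt (le_max_right _ _) hq1
    exact ⟨q, ⟨h1.le, hq2.le⟩, by subst h; rw [abs_of_nonpos (by linarith)]; linarith⟩


/-- For continuous `d`, real points at distance `≤ ε` are controlled by `osc` at scale `2ε`. -/
lemma abs_sub_le_osc {d : ℝ → ℝ} (hd : Continuous d) {T ε M : ℝ} (hT : 0 < T) (hε : 0 < ε)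
    (hM : ∀ t ∈ Set.Icc (0:ℝ) T, |d t| ≤ M)
    {s t : ℝ} (hs : s ∈ Set.Icc (0:ℝ) T) (ht : t ∈ Set.Icc (0:ℝ) T)
    (hst : |s - t| ≤ ε) :
    |d s - d t| ≤ osc d T (2 * ε) := by
  refine le_of_forall_pos_le_add fun η hη => ?_
  obtain ⟨δ₁, hδ₁, hs'⟩ := Metric.continuous_iff.1 hd s (η / 2) (by linarith)
  obtain ⟨δ₂, hδ₂, ht'⟩ := Metric.continuous_iff.1 hd t (η / 2) (by linarith)
  obtain ⟨q, hq, hqs⟩ := exists_rat_near' hT hs (show (0:ℝ) < min (ε / 2) δ₁ by positivity)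
  obtain ⟨r, hr, hrt⟩ := exists_rat_near' hT ht (show (0:ℝ) < min (ε / 2) δ₂ by positivity)
  have hq1 : |(q:ℝ) - s| < ε / 2 := hqs.trans_le (min_le_left _ _)
  have hq2 : dist (q:ℝ) s < δ₁ := by rw [Real.dist_eq]; exact hqs.trans_le (min_le_right _ _)
  have hr1 : |(r:ℝ) - t| < ε / 2 := hrt.trans_le (min_le_left _ _)
  have hr2 : dist (r:ℝ) t < δ₂ := by rw [Real.dist_eq]; exact hrt.trans_le (min_le_right _ _)
  have hmem : (q, r) ∈ oscIdx T (2 * ε) := by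
    refine ⟨hq.1, hq.2, hr.1, hr.2, ?_⟩
    have : |(q:ℝ) - (r:ℝ)| ≤ |(q:ℝ) - s| + |s - t| + |t - (r:ℝ)| := by
      calc |(q:ℝ) - (r:ℝ)| = |((q:ℝ) - s) + (s - t) + (t - (r:ℝ))| := by ring_nf
      _ ≤ _ := by exact (abs_add_le _ _).trans (add_le_add_left (abs_add_le _ _) _)
    rw [abs_sub_comm t (r:ℝ)] at this
    linarith
  have hdq : |d (q:ℝ) - d s| < η / 2 := by have := hs' _ hq2; rwa [Real.dist_eq] at this
  have hdr : |d (r:ℝ) - d t| < η / 2 := by have := ht' _ hr2; rwa [Real.dist_eq] at this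
  have hkey := le_osc (ε := 2 * ε) hM hmem
  calc |d s - d t| ≤ |d s - d (q:ℝ)| + |d (q:ℝ) - d (r:ℝ)| + |d (r:ℝ) - d t| := by
        calc |d s - d t| = |((d s - d (q:ℝ)) + (d (q:ℝ) - d (r:ℝ))) + (d (r:ℝ) - d t)| := by ring_nf
        _ ≤ _ := (abs_add_le _ _).trans (add_le_add_left (abs_add_le _ _) _)
  _ ≤ η / 2 + osc d T (2 * ε) + η / 2 := by
        rw [abs_sub_comm (d s)]
        exact add_le_add (add_le_add hdq.le hkey) hdr.le
  _ = osc d T (2 * ε) + η := by ring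

/-- `osc d T (1/(n+1)) → 0` for continuous `d`. -/
lemma osc_tendsto {d : ℝ → ℝ} (hd : Continuous d) {T M : ℝ} (hT : 0 < T)
    (hM : ∀ t ∈ Set.Icc (0:ℝ) T, |d t| ≤ M) :
    Filter.Tendsto (fun n : ℕ => osc d T (1 / (n + 1))) Filter.atTop (nhds 0) := by
  have huc : UniformContinuousOn d (Set.Icc (0:ℝ) T) :=
    isCompact_Icc.uniformContinuousOn_of_continuous hd.continuousOn
  rw [Metric.uniformContinuousOn_iff] at huc
  rw [Metric.tendsto_atTop]
  intro η hη
  obtain ⟨δ, hδ, hδ'⟩ := huc (η / 2) (by linarith)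
  obtain ⟨N, hN⟩ := exists_nat_gt (1 / δ)
  refine ⟨N, fun n hn => ?_⟩
  have hpos : (0:ℝ) < 1 / (n + 1) := by positivity
  have hsmall : (1:ℝ) / (n + 1) < δ := by
    rw [div_lt_iff₀ (by positivity)]
    rw [div_lt_iff₀ hδ] at hN
    have : (N:ℝ) ≤ n := Nat.cast_le.2 hn
    nlinarith
  have h1 : osc d T (1 / (n + 1)) ≤ η / 2 := by
    refine osc_le hT.le hpos.le fun p hp => ?_
    obtain ⟨h1, h2, h3, h4, h5⟩ := hp
    have := hδ' _ ⟨h1, h2⟩ _ ⟨h3, h4⟩ (by rw [Real.dist_eq]; exact h5.trans_lt hsmall)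
    rw [Real.dist_eq] at this
    exact this.le
  have h0 : 0 ≤ osc d T (1 / (n + 1)) := osc_nonneg hT.le hpos.le hM
  rw [Real.dist_eq, abs_of_nonneg (by linarith [sub_nonneg.2 h0]; )]
  · simp only [sub_zero]; linarith

lemma osc_measurable {Ω : Type*} [MeasurableSpace Ω] (X : Ω → ℝ → ℝ)
    (hmeas : Measurable fun p : Ω × ℝ => deriv (X p.1) p.2) (T ε : ℝ) :
    Measurable fun ω => osc (deriv (X ω)) T ε := by
  apply Measurable.iSup
  intro p
  have h1 : Measurable fun ω => deriv (X ω) (p.1.1 : ℝ) :=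
    hmeas.comp (measurable_id.prodMk measurable_const)
  have h2 : Measurable fun ω => deriv (X ω) (p.1.2 : ℝ) :=
    hmeas.comp (measurable_id.prodMk measurable_const)
  exact (h1.sub h2).abs

lemma integrable_of_bdd {Ω : Type*} [MeasurableSpace Ω] {μ : Measure Ω}
    [IsProbabilityMeasure μ] {f : Ω → ℝ} {C : ℝ} (hf : AEStronglyMeasurable f μ)
    (hC : ∀ ω, |f ω| ≤ C) : Integrable f μ :=
  (integrable_const C).mono' hf (Filter.Eventually.of_forall fun ω => by
    rw [Real.norm_eq_abs]; exact hC ω)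

lemma abs_integral_le' {Ω : Type*} [MeasurableSpace Ω] {μ : Measure Ω} (f : Ω → ℝ) :
    |∫ ω, f ω ∂μ| ≤ ∫ ω, |f ω| ∂μ := by
  simpa [Real.norm_eq_abs] using norm_integral_le_integral_norm (μ := μ) f

lemma abs_integral_le_bdd {Ω : Type*} [MeasurableSpace Ω] {μ : Measure Ω}
    [IsProbabilityMeasure μ] {f : Ω → ℝ} {C : ℝ} (hf : AEStronglyMeasurable f μ)
    (hC : ∀ ω, |f ω| ≤ C) : |∫ ω, f ω ∂μ| ≤ C := by
  calc |∫ ω, f ω ∂μ| ≤ ∫ ω, |f ω| ∂μ := abs_integral_le' _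
  _ ≤ ∫ _ω, C ∂μ := integral_mono (integrable_of_bdd hf hC).abs
      (integrable_const C) hC
  _ = C := by simp

/-- Variance comparison: if `|Y - Z| ≤ g` pointwise with everything bounded, the variances
differ by at most `8 M ∫ g`. -/
lemma var_diff {Ω : Type*} [MeasurableSpace Ω] (μ : Measure Ω) [IsProbabilityMeasure μ]
    (Y Z g : Ω → ℝ) (M : ℝ)
    (hM0 : 0 ≤ M)
    (hY : AEStronglyMeasurable Y μ) (hZ : AEStronglyMeasurable Z μ)
    (hg : AEStronglyMeasurable g μ)
    (hYb : ∀ ω, |Y ω| ≤ M) (hZb : ∀ ω, |Z ω| ≤ M) (hgb : ∀ ω, g ω ≤ 2 * M)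
    (hYZ : ∀ ω, |Y ω - Z ω| ≤ g ω) :
    |(∫ ω, (Y ω - ∫ ω', Y ω' ∂μ) ^ 2 ∂μ) - ∫ ω, (Z ω - ∫ ω', Z ω' ∂μ) ^ 2 ∂μ|
      ≤ 8 * M * ∫ ω, g ω ∂μ := by
  set EY := ∫ ω', Y ω' ∂μ with hEY
  set EZ := ∫ ω', Z ω' ∂μ with hEZ
  set H := ∫ ω, g ω ∂μ with hH
  have hg0 : ∀ ω, 0 ≤ g ω := fun ω => (abs_nonneg _).trans (hYZ ω)
  have hgabs : ∀ ω, |g ω| ≤ 2 * M := fun ω => by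
    rw [abs_of_nonneg (hg0 ω)]; exact hgb ω
  have hginteg : Integrable g μ := integrable_of_bdd hg hgabs
  have hYint : Integrable Y μ := integrable_of_bdd hY hYb
  have hZint : Integrable Z μ := integrable_of_bdd hZ hZb
  have hEYb : |EY| ≤ M := abs_integral_le_bdd hY hYb
  have hEZb : |EZ| ≤ M := abs_integral_le_bdd hZ hZb
  have hEdiff : |EY - EZ| ≤ H := by
    rw [hEY, hEZ, ← integral_sub hYint hZint]
    calc |∫ ω, (Y ω - Z ω) ∂μ| ≤ ∫ ω, |Y ω - Z ω| ∂μ := abs_integral_le' _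
    _ ≤ ∫ ω, g ω ∂μ := integral_mono (hYint.sub hZint).abs hginteg hYZ
  have key : ∀ ω, |(Y ω - EY) ^ 2 - (Z ω - EZ) ^ 2| ≤ 4 * M * g ω + 4 * M * H := by
    intro ω
    have h1 : |Y ω - EY + (Z ω - EZ)| ≤ 4 * M := by
      have := hYb ω; have := hZb ω
      cases abs_cases (Y ω) <;> cases abs_cases (Z ω) <;> cases abs_cases EY <;>
        cases abs_cases EZ <;> cases abs_cases (Y ω - EY + (Z ω - EZ)) <;> linarith
    have h2 : |Y ω - EY - (Z ω - EZ)| ≤ g ω + H := by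
      have := hYZ ω
      cases abs_cases (Y ω - Z ω) <;> cases abs_cases (EY - EZ) <;>
        cases abs_cases (Y ω - EY - (Z ω - EZ)) <;> linarith
    calc |(Y ω - EY) ^ 2 - (Z ω - EZ) ^ 2|
        = |Y ω - EY + (Z ω - EZ)| * |Y ω - EY - (Z ω - EZ)| := by
          rw [← abs_mul]; ring_nf
    _ ≤ 4 * M * (g ω + H) := by
          apply mul_le_mul h1 h2 (abs_nonneg _)
          have := hYb ω; have := hZb ω
          cases abs_cases (Y ω) <;> cases abs_cases EY <;> linarith
    _ = 4 * M * g ω + 4 * M * H := by ring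
  have hsqY : Integrable (fun ω => (Y ω - EY) ^ 2) μ := by
    refine integrable_of_bdd ((hY.sub aestronglyMeasurable_const).pow 2) (C := 4 * M ^ 2) ?_
    intro ω
    have := hYb ω
    rw [abs_of_nonneg (sq_nonneg _)]
    cases abs_cases (Y ω) <;> cases abs_cases EY <;> nlinarith
  have hsqZ : Integrable (fun ω => (Z ω - EZ) ^ 2) μ := by
    refine integrable_of_bdd ((hZ.sub aestronglyMeasurable_const).pow 2) (C := 4 * M ^ 2) ?_
    intro ω
    have := hZb ω
    rw [abs_of_nonneg (sq_nonneg _)]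
    cases abs_cases (Z ω) <;> cases abs_cases EZ <;> nlinarith
  rw [← integral_sub hsqY hsqZ]
  calc |∫ ω, ((Y ω - EY) ^ 2 - (Z ω - EZ) ^ 2) ∂μ|
      ≤ ∫ ω, |(Y ω - EY) ^ 2 - (Z ω - EZ) ^ 2| ∂μ := abs_integral_le' _
  _ ≤ ∫ ω, (4 * M * g ω + 4 * M * H) ∂μ := by
      refine integral_mono (hsqY.sub hsqZ).abs ?_ key
      exact (hginteg.const_mul _).add (integrable_const _)
  _ = 4 * M * H + 4 * M * H := by
      rw [integral_add (hginteg.const_mul _) (integrable_const _), MeasureTheory.integral_const_mul,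
        MeasureTheory.integral_const]
      simp [hH]
  _ = 8 * M * H := by ring

lemma osc_le_bound {d : ℝ → ℝ} {T ε M : ℝ} (hT : 0 ≤ T) (hε : 0 ≤ ε)
    (hM : ∀ t ∈ Set.Icc (0:ℝ) T, |d t| ≤ M) : osc d T ε ≤ 2 * M := by
  refine osc_le hT hε fun p hp => ?_
  obtain ⟨h1, h2, h3, h4, -⟩ := hp
  calc |d (p.1 : ℝ) - d (p.2 : ℝ)| ≤ |d (p.1 : ℝ)| + |d (p.2 : ℝ)| := abs_sub _ _
  _ ≤ M + M := add_le_add (hM _ ⟨h1, h2⟩) (hM _ ⟨h3, h4⟩)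
  _ = 2 * M := by ring

/-- The mean point-wise gradient deviation of a random `C¹` function `X` on `[0,T]`:
`MPGD = (1/T)∫₀ᵀ √(E[((X·)'(t) − E[(X·)'(t)])²]) dt`, i.e. the time-average of the
point-wise standard deviation of the derivative. -/
noncomputable def MPGD {Ω : Type*} [MeasurableSpace Ω] (μ : Measure Ω)
    (T : ℝ) (X : Ω → ℝ → ℝ) : ℝ :=
  (1 / T) * ∫ t in (0:ℝ)..T,
    Real.sqrt (∫ ω, (deriv (X ω) t - ∫ ω', deriv (X ω') t ∂μ) ^ 2 ∂μ)

set_option maxHeartbeats 2000000 in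
/-- Let `T > 0`, `(Ω, μ)` a probability space and `X : Ω → (ℝ → ℝ)` a
random continuously differentiable function with jointly measurable and uniformly bounded
derivative on `[0,T]`. For step `ε` with `T/ε = K ∈ ℕ` and grid points `t = ε, 2ε, …, T`,
let `σ_ε(t)` be the standard deviation (over `ω`) of the divided difference
`(X ω t − X ω (t−ε))/ε`. Then `(ε/T) ∑_t σ_ε(t) → MPGD` as `ε → 0` along steps with
`T/ε ∈ ℕ`. -/
theorem statement12 {Ω : Type*} [MeasurableSpace Ω] (μ : Measure Ω) [IsProbabilityMeasure μ]
    (T : ℝ) (hT : 0 < T) (X : Ω → ℝ → ℝ)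
    (hC1 : ∀ ω, ContDiff ℝ 1 (X ω))
    (hmeas : Measurable fun p : Ω × ℝ => deriv (X p.1) p.2)
    (M : ℝ) (hM : ∀ ω, ∀ t ∈ Set.Icc (0:ℝ) T, |deriv (X ω) t| ≤ M) :
    ∀ δ > 0, ∃ ε₀ > 0, ∀ ε : ℝ, 0 < ε → ε < ε₀ → ∀ K : ℕ, (K : ℝ) * ε = T →
      |(ε / T) * ∑ k ∈ Finset.range K,
          Real.sqrt (∫ ω,
            ((X ω (((k : ℝ) + 1) * ε) - X ω ((k : ℝ) * ε)) / ε
              - ∫ ω', (X ω' (((k : ℝ) + 1) * ε) - X ω' ((k : ℝ) * ε)) / ε ∂μ) ^ 2 ∂μ)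
        - MPGD μ T X| < δ := by
  intro δ hδ
  have hΩ : Nonempty Ω := by
    by_contra h
    rw [not_nonempty_iff] at h
    have h1 : μ Set.univ = 1 := measure_univ
    simp [Set.univ_eq_empty_iff.2 h] at h1
  have hM0 : 0 ≤ M :=
    (abs_nonneg _).trans (hM (Classical.arbitrary Ω) 0 ⟨le_rfl, hT.le⟩)
  have hdc : ∀ ω, Continuous (deriv (X ω)) := fun ω => (hC1 ω).continuous_deriv le_rfl
  have hZmeas : ∀ t : ℝ, Measurable fun ω => deriv (X ω) t := fun t =>
    hmeas.comp (measurable_id.prodMk measurable_const)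
  -- dominated convergence : the averaged modulus tends to 0
  have htend : Filter.Tendsto (fun n : ℕ => ∫ ω, osc (deriv (X ω)) T (1 / (n + 1)) ∂μ)
      Filter.atTop (nhds 0) := by
    have h0 : (0:ℝ) = ∫ _ω, (0:ℝ) ∂μ := by simp
    rw [h0]
    apply tendsto_integral_of_dominated_convergence (fun _ => 2 * M)
    · exact fun n => (osc_measurable X hmeas T _).aestronglyMeasurable
    · exact integrable_const _
    · intro n
      refine Filter.Eventually.of_forall fun ω => ?_
      have hpos : (0:ℝ) ≤ 1 / (n + 1) := by positivity
      rw [Real.norm_eq_abs, abs_of_nonneg (osc_nonneg hT.le hpos (hM ω))]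
      exact osc_le_bound hT.le hpos (hM ω)
    · exact Filter.Eventually.of_forall fun ω => osc_tendsto (hdc ω) hT (hM ω)
  obtain ⟨N, hN⟩ := (Metric.tendsto_atTop.1 htend) (δ ^ 2 / (8 * M + 1))
    (by positivity)
  refine ⟨1 / (2 * (N + 1)), by positivity, fun ε hε hεε₀ K hK => ?_⟩
  have hKpos : 0 < K := by
    rcases Nat.eq_zero_or_pos K with h | h
    · exfalso; rw [h] at hK; simp at hK; linarith
    · exact h
  -- grid points lie in [0,T]
  have hgrid : ∀ k : ℕ, k < K → (k:ℝ) * ε ∈ Set.Icc (0:ℝ) T ∧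
      ((k:ℝ) + 1) * ε ∈ Set.Icc (0:ℝ) T := by
    intro k hk
    have h1 : ((k:ℝ) + 1) ≤ (K:ℝ) := by exact_mod_cast Nat.succ_le_of_lt hk
    constructor
    · exact ⟨by positivity, by nlinarith⟩
    · exact ⟨by positivity, by nlinarith⟩
  set H := ∫ ω, osc (deriv (X ω)) T (2 * ε) ∂μ with hHdef
  have hH0 : 0 ≤ H := integral_nonneg fun ω =>
    osc_nonneg hT.le (by positivity) (hM ω)
  have hHlt : H < δ ^ 2 / (8 * M + 1) := by
    have h2ε : 2 * ε ≤ 1 / (N + 1) := by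
      have : ε < 1 / (2 * (N + 1)) := hεε₀
      rw [lt_div_iff₀ (by positivity : (0:ℝ) < 2 * ((N:ℝ) + 1))] at this
      rw [le_div_iff₀ (by positivity : (0:ℝ) < (N:ℝ) + 1)]
      linarith
    have hmono : H ≤ ∫ ω, osc (deriv (X ω)) T (1 / (N + 1)) ∂μ := by
      refine integral_mono ?_ ?_ fun ω => osc_mono hT.le (by positivity) h2ε (hM ω)
      · refine integrable_of_bdd (osc_measurable X hmeas T _).aestronglyMeasurable
          (C := 2 * M) fun ω => ?_
        rw [abs_of_nonneg (osc_nonneg hT.le (by positivity) (hM ω))]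
        exact osc_le_bound hT.le (by positivity) (hM ω)
      · refine integrable_of_bdd (osc_measurable X hmeas T _).aestronglyMeasurable
          (C := 2 * M) fun ω => ?_
        have hpos : (0:ℝ) ≤ 1 / ((N:ℝ) + 1) := by positivity
        rw [abs_of_nonneg (osc_nonneg hT.le hpos (hM ω))]
        exact osc_le_bound hT.le hpos (hM ω)
    have := hN N le_rfl
    rw [Real.dist_eq, sub_zero] at this
    have h0 : 0 ≤ ∫ ω, osc (deriv (X ω)) T (1 / (N + 1)) ∂μ :=
      integral_nonneg fun ω => osc_nonneg hT.le (by positivity) (hM ω)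
    rw [abs_of_nonneg h0] at this
    calc H ≤ _ := hmono
    _ < _ := by exact_mod_cast this
  -- The divided differences as averaged derivatives
  set Y : ℕ → Ω → ℝ :=
    fun k ω => (∫ s in ((k:ℝ) * ε)..(((k:ℝ) + 1) * ε), deriv (X ω) s) / ε with hYdef
  have hftc : ∀ ω, ∀ k : ℕ,
      (X ω (((k:ℝ) + 1) * ε) - X ω ((k:ℝ) * ε)) / ε = Y k ω := by
    intro ω k
    rw [hYdef]
    have := intervalIntegral.integral_deriv_eq_sub
      (f := X ω) (a := (k:ℝ) * ε) (b := ((k:ℝ) + 1) * ε)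
      (fun x _ => ((hC1 ω).differentiable one_ne_zero).differentiableAt)
      (((hdc ω)).intervalIntegrable _ _)
    simp only []
    rw [this]
  have hYmeas : ∀ k : ℕ, Measurable (Y k) := by
    intro k
    have hle : (k:ℝ) * ε ≤ ((k:ℝ) + 1) * ε := by nlinarith
    have h1 : StronglyMeasurable fun ω =>
        ∫ s in Set.Ioc ((k:ℝ) * ε) (((k:ℝ) + 1) * ε), deriv (X ω) s := by
      exact (hmeas.stronglyMeasurable).integral_prod_right'
        (ν := volume.restrict (Set.Ioc ((k:ℝ) * ε) (((k:ℝ) + 1) * ε)))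
    have h2 : Measurable fun ω =>
        ∫ s in ((k:ℝ) * ε)..(((k:ℝ) + 1) * ε), deriv (X ω) s := by
      simp_rw [intervalIntegral.integral_of_le hle]
      exact h1.measurable
    exact h2.div_const ε
  have hYbdd : ∀ k : ℕ, k < K → ∀ ω, |Y k ω| ≤ M := by
    intro k hk ω
    have hle : (k:ℝ) * ε ≤ ((k:ℝ) + 1) * ε := by nlinarith
    have hsub : Set.uIoc ((k:ℝ) * ε) (((k:ℝ) + 1) * ε) ⊆ Set.Icc (0:ℝ) T := by
      rw [Set.uIoc_of_le hle]
      intro x hx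
      obtain ⟨⟨ha0, -⟩, ⟨-, hbT⟩⟩ := hgrid k hk
      exact ⟨le_of_lt (lt_of_le_of_lt ha0 hx.1), hx.2.trans hbT⟩
    have hnorm := intervalIntegral.norm_integral_le_of_norm_le_const
      (C := M) (f := deriv (X ω)) (a := (k:ℝ) * ε) (b := ((k:ℝ) + 1) * ε)
      (fun x hx => by rw [Real.norm_eq_abs]; exact hM ω x (hsub hx))
    rw [Real.norm_eq_abs] at hnorm
    have hb : |((k:ℝ) + 1) * ε - (k:ℝ) * ε| = ε := by
      rw [abs_of_nonneg (by nlinarith)]; ring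
    rw [hb] at hnorm
    rw [hYdef]
    simp only [abs_div, abs_of_pos hε]
    rw [div_le_iff₀ hε]
    exact hnorm
  -- pointwise comparison with the derivative
  have hYZ : ∀ k : ℕ, k < K → ∀ ω, ∀ t ∈ Set.Icc ((k:ℝ) * ε) (((k:ℝ) + 1) * ε),
      |Y k ω - deriv (X ω) t| ≤ osc (deriv (X ω)) T (2 * ε) := by
    intro k hk ω t ht
    have hle : (k:ℝ) * ε ≤ ((k:ℝ) + 1) * ε := by nlinarith
    have htT : t ∈ Set.Icc (0:ℝ) T := by
      obtain ⟨⟨ha0, -⟩, ⟨-, hbT⟩⟩ := hgrid k hk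
      exact ⟨ha0.trans ht.1, ht.2.trans hbT⟩
    have heq : Y k ω - deriv (X ω) t
        = (∫ s in ((k:ℝ) * ε)..(((k:ℝ) + 1) * ε), (deriv (X ω) s - deriv (X ω) t)) / ε := by
      rw [intervalIntegral.integral_sub ((hdc ω).intervalIntegrable _ _)
        (intervalIntegrable_const), intervalIntegral.integral_const, hYdef]
      have : (((k:ℝ) + 1) * ε - (k:ℝ) * ε) = ε := by ring
      rw [this, smul_eq_mul]
      field_simp
    rw [heq]
    have hnorm := intervalIntegral.norm_integral_le_of_norm_le_const
      (C := osc (deriv (X ω)) T (2 * ε))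
      (f := fun s => deriv (X ω) s - deriv (X ω) t)
      (a := (k:ℝ) * ε) (b := ((k:ℝ) + 1) * ε) ?_
    · rw [Real.norm_eq_abs] at hnorm
      have hb : |((k:ℝ) + 1) * ε - (k:ℝ) * ε| = ε := by
        rw [abs_of_nonneg (by nlinarith)]; ring
      rw [hb] at hnorm
      rw [abs_div, abs_of_pos hε, div_le_iff₀ hε]
      exact hnorm
    · intro x hx
      rw [Set.uIoc_of_le hle] at hx
      have hxT : x ∈ Set.Icc (0:ℝ) T := by
        obtain ⟨⟨ha0, -⟩, ⟨-, hbT⟩⟩ := hgrid k hk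
        exact ⟨le_of_lt (lt_of_le_of_lt ha0 hx.1), hx.2.trans hbT⟩
      rw [Real.norm_eq_abs]
      refine abs_sub_le_osc (hdc ω) hT hε (hM ω) hxT htT ?_
      have h1 := hx.1; have h2 := hx.2
      have h3 := ht.1; have h4 := ht.2
      rw [abs_le]; constructor <;> nlinarith
  -- the limit variance function and the discrete variances
  set B : ℝ → ℝ := fun t => ∫ ω, (deriv (X ω) t - ∫ ω', deriv (X ω') t ∂μ) ^ 2 ∂μ
    with hBdef
  set A : ℕ → ℝ := fun k => ∫ ω, (Y k ω - ∫ ω', Y k ω' ∂μ) ^ 2 ∂μ with hAdef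
  -- key comparison of variances
  have hAB : ∀ k : ℕ, k < K → ∀ t ∈ Set.Icc ((k:ℝ) * ε) (((k:ℝ) + 1) * ε),
      |A k - B t| ≤ 8 * M * H := by
    intro k hk t ht
    have htT : t ∈ Set.Icc (0:ℝ) T := by
      obtain ⟨⟨ha0, -⟩, ⟨-, hbT⟩⟩ := hgrid k hk
      exact ⟨ha0.trans ht.1, ht.2.trans hbT⟩
    exact var_diff μ (Y k) (fun ω => deriv (X ω) t) (fun ω => osc (deriv (X ω)) T (2 * ε))
      M hM0 (hYmeas k).aestronglyMeasurable (hZmeas t).aestronglyMeasurable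
      (osc_measurable X hmeas T _).aestronglyMeasurable
      (hYbdd k hk) (fun ω => hM ω t htT)
      (fun ω => osc_le_bound hT.le (by positivity) (hM ω))
      (fun ω => hYZ k hk ω t ht)
  have hsqrtAB : ∀ k : ℕ, k < K → ∀ t ∈ Set.Icc ((k:ℝ) * ε) (((k:ℝ) + 1) * ε),
      |Real.sqrt (A k) - Real.sqrt (B t)| ≤ Real.sqrt (8 * M * H) := by
    intro k hk t ht
    refine (abs_sqrt_sub_sqrt_le _ _).trans (Real.sqrt_le_sqrt (hAB k hk t ht))
  -- B is measurable and bounded, so √B is interval integrable on [0,T]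
  have hm' : StronglyMeasurable fun t : ℝ => ∫ ω', deriv (X ω') t ∂μ :=
    (hmeas.stronglyMeasurable).integral_prod_left'
  have hBmeas : Measurable B := by
    have hpair : Measurable fun p : Ω × ℝ =>
        (deriv (X p.1) p.2 - ∫ ω', deriv (X ω') p.2 ∂μ) ^ 2 :=
      ((hmeas.sub (hm'.measurable.comp measurable_snd)).pow_const 2)
    exact (hpair.stronglyMeasurable.integral_prod_left').measurable
  have hBbdd : ∀ t ∈ Set.Icc (0:ℝ) T, |B t| ≤ 4 * M ^ 2 := by
    intro t htT
    refine abs_integral_le_bdd ?_ ?_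
    · exact (((hZmeas t).sub measurable_const).pow_const 2).aestronglyMeasurable
    · intro ω
      have h1 := hM ω t htT
      have h2 : |∫ ω', deriv (X ω') t ∂μ| ≤ M :=
        abs_integral_le_bdd (hZmeas t).aestronglyMeasurable fun ω' => hM ω' t htT
      rw [abs_of_nonneg (sq_nonneg _)]
      have h3 : |deriv (X ω) t - ∫ ω', deriv (X ω') t ∂μ| ≤ 2 * M :=
        (abs_sub _ _).trans (by linarith)
      rw [abs_le] at h3
      have := sq_le_sq' (by linarith : -(2*M) ≤ deriv (X ω) t - ∫ ω', deriv (X ω') t ∂μ)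
        (by linarith)
      calc (deriv (X ω) t - ∫ ω', deriv (X ω') t ∂μ) ^ 2 ≤ (2*M)^2 := this
      _ = 4 * M ^ 2 := by ring
  have hsqrtBint : IntervalIntegrable (fun t => Real.sqrt (B t)) volume 0 T := by
    rw [intervalIntegrable_iff_integrableOn_Ioc_of_le hT.le]
    refine Integrable.mono' (g := fun _ => 2 * M)
      (integrableOn_const measure_Ioc_lt_top.ne) ?_ ?_
    · exact (Real.continuous_sqrt.measurable.comp hBmeas).aestronglyMeasurable.restrict
    · rw [ae_restrict_iff' measurableSet_Ioc]
      refine Filter.Eventually.of_forall fun t ht => ?_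
      have h1 := hBbdd t ⟨ht.1.le, ht.2⟩
      rw [Real.norm_eq_abs, abs_of_nonneg (Real.sqrt_nonneg _)]
      calc Real.sqrt (B t) ≤ Real.sqrt (4 * M ^ 2) :=
        Real.sqrt_le_sqrt (by cases abs_cases (B t) <;> linarith)
      _ = 2 * M := by
        rw [show (4:ℝ) * M ^ 2 = (2*M)^2 by ring, Real.sqrt_sq (by linarith)]
  -- grid decomposition of the MPGD integral
  set a : ℕ → ℝ := fun k => (k:ℝ) * ε with hadef
  have ha1 : ∀ k : ℕ, a (k + 1) = ((k:ℝ) + 1) * ε := by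
    intro k; rw [hadef]; push_cast; ring
  have hamono : ∀ k : ℕ, a k ≤ a (k + 1) := by
    intro k; rw [ha1]
    show (k:ℝ) * ε ≤ ((k:ℝ) + 1) * ε
    nlinarith
  have hasub : ∀ k : ℕ, k < K → Set.Icc (a k) (a (k + 1)) ⊆ Set.Icc (0:ℝ) T := by
    intro k hk x hx
    obtain ⟨⟨h1, -⟩, ⟨-, h4⟩⟩ := hgrid k hk
    rw [ha1] at hx
    exact ⟨h1.trans hx.1, hx.2.trans h4⟩
  have hintk : ∀ k : ℕ, k < K →
      IntervalIntegrable (fun t => Real.sqrt (B t)) volume (a k) (a (k + 1)) := by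
    intro k hk
    refine hsqrtBint.mono_set ?_
    rw [Set.uIcc_of_le (hamono k), Set.uIcc_of_le hT.le]
    exact hasub k hk
  have hsplit : ∫ t in (0:ℝ)..T, Real.sqrt (B t)
      = ∑ k ∈ Finset.range K, ∫ t in a k..a (k + 1), Real.sqrt (B t) := by
    rw [intervalIntegral.sum_integral_adjacent_intervals fun k hk => hintk k hk]
    have h0 : a 0 = 0 := by rw [hadef]; simp
    have hK' : a K = T := by rw [hadef]; exact hK
    rw [h0, hK']
  -- per-interval estimate
  have hperk : ∀ k ∈ Finset.range K,
      |ε * Real.sqrt (A k) - ∫ t in a k..a (k + 1), Real.sqrt (B t)|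
        ≤ ε * Real.sqrt (8 * M * H) := by
    intro k hk'
    have hk := Finset.mem_range.1 hk'
    have hconst : ε * Real.sqrt (A k) = ∫ _t in a k..a (k + 1), Real.sqrt (A k) := by
      rw [intervalIntegral.integral_const, smul_eq_mul, ha1]
      show ε * Real.sqrt (A k) = (((k:ℝ) + 1) * ε - (k:ℝ) * ε) * Real.sqrt (A k)
      ring
    rw [hconst, ← intervalIntegral.integral_sub intervalIntegrable_const (hintk k hk)]
    have hnorm := intervalIntegral.norm_integral_le_of_norm_le_const
      (C := Real.sqrt (8 * M * H))
      (f := fun t => Real.sqrt (A k) - Real.sqrt (B t))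
      (a := a k) (b := a (k + 1)) ?_
    · rw [Real.norm_eq_abs] at hnorm
      have hb : |a (k + 1) - a k| = ε := by
        rw [ha1]
        show |((k:ℝ) + 1) * ε - (k:ℝ) * ε| = ε
        rw [abs_of_nonneg (by nlinarith)]; ring
      rw [hb] at hnorm
      linarith [hnorm]
    · intro x hx
      rw [Set.uIoc_of_le (hamono k)] at hx
      have hx' : x ∈ Set.Icc ((k:ℝ) * ε) (((k:ℝ) + 1) * ε) := by
        rw [← ha1]; exact ⟨hx.1.le, hx.2⟩
      rw [Real.norm_eq_abs]
      exact hsqrtAB k hk x hx'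
  -- rewrite the statement's sum via the FTC identities
  have hsum_eq : ∑ k ∈ Finset.range K,
      Real.sqrt (∫ ω,
        ((X ω (((k : ℝ) + 1) * ε) - X ω ((k : ℝ) * ε)) / ε
          - ∫ ω', (X ω' (((k : ℝ) + 1) * ε) - X ω' ((k : ℝ) * ε)) / ε ∂μ) ^ 2 ∂μ)
      = ∑ k ∈ Finset.range K, Real.sqrt (A k) := by
    refine Finset.sum_congr rfl fun k _ => ?_
    rw [hAdef]
    simp only [hftc]
  have hMPGD : MPGD μ T X = (1 / T) * ∫ t in (0:ℝ)..T, Real.sqrt (B t) := by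
    rw [hBdef]; rfl
  rw [hsum_eq, hMPGD, hsplit]
  have hfinal : (ε / T) * (∑ k ∈ Finset.range K, Real.sqrt (A k))
      - (1 / T) * ∑ k ∈ Finset.range K, (∫ t in a k..a (k + 1), Real.sqrt (B t))
      = (1 / T) * ∑ k ∈ Finset.range K,
        (ε * Real.sqrt (A k) - ∫ t in a k..a (k + 1), Real.sqrt (B t)) := by
    rw [Finset.sum_sub_distrib, ← Finset.mul_sum]
    ring
  rw [hfinal]
  have hbound : |(1 / T) * ∑ k ∈ Finset.range K,
      (ε * Real.sqrt (A k) - ∫ t in a k..a (k + 1), Real.sqrt (B t))|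
      ≤ Real.sqrt (8 * M * H) := by
    rw [abs_mul, abs_of_pos (by positivity : (0:ℝ) < 1 / T)]
    calc (1 / T) * |∑ k ∈ Finset.range K,
        (ε * Real.sqrt (A k) - ∫ t in a k..a (k + 1), Real.sqrt (B t))|
        ≤ (1 / T) * ∑ k ∈ Finset.range K,
          |ε * Real.sqrt (A k) - ∫ t in a k..a (k + 1), Real.sqrt (B t)| := by
          apply mul_le_mul_of_nonneg_left (Finset.abs_sum_le_sum_abs _ _) (by positivity)
    _ ≤ (1 / T) * ∑ _k ∈ Finset.range K, ε * Real.sqrt (8 * M * H) := by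
          apply mul_le_mul_of_nonneg_left (Finset.sum_le_sum hperk) (by positivity)
    _ = (1 / T) * ((K:ℝ) * ε * Real.sqrt (8 * M * H)) := by
          rw [Finset.sum_const, Finset.card_range, nsmul_eq_mul]; ring
    _ = Real.sqrt (8 * M * H) := by rw [hK]; field_simp
  have h8 : 8 * M * H < δ ^ 2 := by
    have hq : δ ^ 2 / (8 * M + 1) * (8 * M + 1) = δ ^ 2 :=
      div_mul_cancel₀ _ (by positivity)
    nlinarith [mul_le_mul_of_nonneg_left hHlt.le (by positivity : (0:ℝ) ≤ 8 * M),
      sq_nonneg δ, hδ, hH0, hHlt]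
  calc |(1 / T) * ∑ k ∈ Finset.range K,
      (ε * Real.sqrt (A k) - ∫ t in a k..a (k + 1), Real.sqrt (B t))|
      ≤ Real.sqrt (8 * M * H) := hbound
  _ < Real.sqrt (δ ^ 2) := Real.sqrt_lt_sqrt (by positivity) h8
  _ = δ := Real.sqrt_sq hδ.le
end
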